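/- Fix a positive integer n and a simple graph G on n vertices with Laplacian matrix L[G]. Let t0 < t1 be real numbers, C > 0, and ψ0 ∈ ℝ^n. Let H be a connected component of G, let k_G denote the number of connected components of G, and let λ_G denote the minimum nonzero eigenvalue of L[G] (assume G has at least one edge so that λ_G exists and λ_G > 0). If ψ : [t0, t1] → ℝ^n is continuous on [t0, t1], differentiable on (t0, t1), satisfies dψ/dt + C·L[G]·ψ = 0 on (t0, t1), and ψ(t0) = ψ0, then for all t with t0 ≤ t ≤ t1: max_{i ∈ H} ψ_i(t) − min_{j ∈ H} ψ_j(t) ≤ 2(n − k_G)·|ψ0|·e^{−C·λ_G·(t − t0)}, where ψ = (ψ_1, …, ψ_n) and i ∈ H means that i is a vertex of the component H. -/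

import Mathlib

open scoped BigOperators

/-- The Euclidean norm on `ℝ^n`. -/
noncomputable def eNorm {n : ℕ} (v : Fin n → ℝ) : ℝ := Real.sqrt (∑ i, v i ^ 2)

open scoped RealInnerProductSpace

set_option maxHeartbeats 1000000 in
/-- Bound on the spread `max_{i ∈ H} ψ_i(t) − min_{j ∈ H} ψ_j(t)` over a
connected component `H` of `G` for a solution of the diffusion equation
`dψ/dt + C·L[G]·ψ = 0`.  Here `kG` is the number of connected components of `G` and `lamG`
the minimum nonzero eigenvalue of `L[G]` (which exists and is positive since `G` has at
least one edge).  The conclusion `∀ i j ∈ H, ψ_i(t) − ψ_j(t) ≤ bound` is exactly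
`max_{i ∈ H} ψ_i(t) − min_{j ∈ H} ψ_j(t) ≤ bound`. -/
theorem diameter_bound
    (n : ℕ) (hn : 0 < n) (G : SimpleGraph (Fin n)) [DecidableRel G.Adj]
    (hedge : ∃ x y : Fin n, G.Adj x y)
    (t0 t1 : ℝ) (ht : t0 < t1) (C : ℝ) (hC : 0 < C) (ψ0 : Fin n → ℝ)
    (H : G.ConnectedComponent)
    (kG : ℕ) (hk : kG = Nat.card G.ConnectedComponent)
    (lamG : ℝ) (hlampos : 0 < lamG)
    (hlameig : ∃ v : Fin n → ℝ, v ≠ 0 ∧ (G.lapMatrix ℝ).mulVec v = lamG • v)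
    (hlammin : ∀ μ : ℝ, (∃ v : Fin n → ℝ, v ≠ 0 ∧ (G.lapMatrix ℝ).mulVec v = μ • v) →
      μ ≠ 0 → lamG ≤ μ)
    (ψ : ℝ → (Fin n → ℝ))
    (hcont : ContinuousOn ψ (Set.Icc t0 t1))
    (hode : ∀ t ∈ Set.Ioo t0 t1,
      HasDerivAt ψ (-(C • (G.lapMatrix ℝ).mulVec (ψ t))) t)
    (hinit : ψ t0 = ψ0) :
    ∀ t ∈ Set.Icc t0 t1, ∀ i j : Fin n,
      G.connectedComponentMk i = H → G.connectedComponentMk j = H →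
      ψ t i - ψ t j ≤ 2 * ((n : ℝ) - (kG : ℝ)) * eNorm ψ0 *
        Real.exp (-C * lamG * (t - t0)) := by
  classical
  intro t htmem i j hi hj
  obtain ⟨htl, htr⟩ := htmem
  -- Setup: the Laplacian as a symmetric operator on Euclidean space
  set T : EuclideanSpace ℝ (Fin n) →ₗ[ℝ] EuclideanSpace ℝ (Fin n) :=
    Matrix.toEuclideanLin (G.lapMatrix ℝ) with hTdef
  have hsymm : T.IsSymmetric :=
    Matrix.isHermitian_iff_isSymmetric.mp (SimpleGraph.posSemidef_lapMatrix ℝ G).isHermitian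
  set K : Submodule ℝ (EuclideanSpace ℝ (Fin n)) := LinearMap.ker T with hKdef
  -- kernel elements are constant on components
  have hKconst : ∀ x ∈ K, x i = x j := by
    intro x hx
    have h0 : Matrix.toLin' (G.lapMatrix ℝ) (WithLp.equiv 2 (Fin n → ℝ) x) = 0 := by
      have hx0 : T x = 0 := LinearMap.mem_ker.mp hx
      have : WithLp.equiv 2 (Fin n → ℝ) (T x) = Matrix.toLin' (G.lapMatrix ℝ)
          (WithLp.equiv 2 (Fin n → ℝ) x) := rfl
      rw [← this, hx0]; rfl
    have hreach : G.Reachable i j := by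
      have : G.connectedComponentMk i = G.connectedComponentMk j := by rw [hi, hj]
      exact (SimpleGraph.ConnectedComponent.eq).mp this
    exact (G.lapMatrix_mulVec_eq_zero_iff_forall_reachable).mp h0 i j hreach
  -- projections
  set P : EuclideanSpace ℝ (Fin n) →L[ℝ] EuclideanSpace ℝ (Fin n) :=
    K.subtypeL.comp (K.orthogonalProjectionOnto) with hPdef
  have hPmem : ∀ x, P x ∈ K := fun x => (K.orthogonalProjectionOnto x).2
  have hPval : ∀ x, P x = (K.orthogonalProjectionOnto x : EuclideanSpace ℝ (Fin n)) := fun x => rfl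
  have hTorth : ∀ x, T x ∈ Kᗮ := by
    intro x
    rw [Submodule.mem_orthogonal]
    intro u hu
    have hu0 : T u = 0 := LinearMap.mem_ker.mp hu
    rw [← hsymm u x, hu0, inner_zero_left]
  have hPT : ∀ x, P (T x) = 0 := by
    intro x
    rw [hPval, Submodule.orthogonalProjectionOnto_apply_of_mem_orthogonal (hTorth x)]
    rfl
  -- the solution in Euclidean space and its kernel-orthogonal part
  set ce : (Fin n → ℝ) ≃L[ℝ] EuclideanSpace ℝ (Fin n) :=
    (PiLp.continuousLinearEquiv 2 ℝ (fun _ : Fin n => ℝ)).symm with hce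
  set Ψ : ℝ → EuclideanSpace ℝ (Fin n) := fun s => ce (ψ s) with hΨdef
  set φ : ℝ → EuclideanSpace ℝ (Fin n) := fun s => Ψ s - P (Ψ s) with hφdef
  have hφmem : ∀ s, φ s ∈ Kᗮ := fun s =>
    Submodule.sub_starProjection_mem_orthogonal (K := K) (Ψ s)
  have hTφ : ∀ s, T (φ s) = T (Ψ s) := by
    intro s
    have : T (P (Ψ s)) = 0 := LinearMap.mem_ker.mp (hPmem (Ψ s))
    simp [hφdef, map_sub, this]
  -- derivative of φ
  have hφd : ∀ s ∈ Set.Ioo t0 t1, HasDerivAt φ (-(C • T (φ s))) s := by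
    intro s hs
    have h1 : HasDerivAt Ψ (ce (-(C • (G.lapMatrix ℝ).mulVec (ψ s)))) s :=
      (ce.toContinuousLinearMap.hasFDerivAt).comp_hasDerivAt s (hode s hs)
    have hval : ce (-(C • (G.lapMatrix ℝ).mulVec (ψ s))) = -(C • T (Ψ s)) := rfl
    rw [hval] at h1
    have h2 : HasDerivAt (fun u => P (Ψ u)) (P (-(C • T (Ψ s)))) s :=
      (P.hasFDerivAt).comp_hasDerivAt s h1
    have hP0 : P (-(C • T (Ψ s))) = 0 := by
      rw [map_neg, map_smul, hPT]; simp
    rw [hP0] at h2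
    have := h1.sub h2
    rw [sub_zero] at this
    rw [← hTφ s] at this
    exact this
  -- spectral gap inequality on the orthogonal complement of the kernel
  have hspec : ∀ x : EuclideanSpace ℝ (Fin n), x ∈ Kᗮ →
      lamG * ⟪x, x⟫ ≤ ⟪T x, x⟫ := by
    intro x hx
    set b := hsymm.eigenvectorBasis finrank_euclideanSpace_fin with hb
    set μ := hsymm.eigenvalues finrank_euclideanSpace_fin with hμ
    have happ : ∀ k, T (b k) = μ k • b k := fun k =>
      hsymm.apply_eigenvectorBasis finrank_euclideanSpace_fin k
    have hxx : ⟪x, x⟫ = ∑ k, ⟪x, b k⟫ * ⟪b k, x⟫ := (b.sum_inner_mul_inner x x).symm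
    have hTx : ⟪x, T x⟫ = ∑ k, μ k * (⟪x, b k⟫ * ⟪b k, x⟫) := by
      rw [← b.sum_inner_mul_inner x (T x)]
      refine Finset.sum_congr rfl fun k _ => ?_
      have hk : ⟪b k, T x⟫ = μ k * ⟪b k, x⟫ := by
        rw [← hsymm (b k) x, happ k, real_inner_smul_left]
      rw [hk]; ring
    have key : ∀ k, lamG * (⟪x, b k⟫ * ⟪b k, x⟫) ≤ μ k * (⟪x, b k⟫ * ⟪b k, x⟫) := by
      intro k
      rcases eq_or_ne (⟪b k, x⟫ : ℝ) 0 with h0 | h0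
      · simp [h0]
      · have hμ0 : μ k ≠ 0 := by
          intro hzero
          have hbker : b k ∈ K := by
            rw [hKdef, LinearMap.mem_ker]
            rw [happ k, hzero, zero_smul]
          exact h0 ((Submodule.mem_orthogonal K x).mp hx (b k) hbker)
        have hvec : ∃ v : Fin n → ℝ, v ≠ 0 ∧ (G.lapMatrix ℝ).mulVec v = μ k • v := by
          refine ⟨WithLp.equiv 2 (Fin n → ℝ) (b k), ?_, ?_⟩
          · have hbne : b k ≠ 0 := b.toBasis.ne_zero k
            simpa using hbne
          · have h1 : WithLp.equiv 2 (Fin n → ℝ) (T (b k)) =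
                (G.lapMatrix ℝ).mulVec (WithLp.equiv 2 (Fin n → ℝ) (b k)) := rfl
            rw [← h1, happ k]
            rfl
        have hge := hlammin (μ k) hvec hμ0
        have hnn : 0 ≤ (⟪x, b k⟫ : ℝ) * ⟪b k, x⟫ := by
          rw [real_inner_comm x (b k)]; exact mul_self_nonneg _
        exact mul_le_mul_of_nonneg_right hge hnn
    calc lamG * ⟪x, x⟫ = ∑ k, lamG * (⟪x, b k⟫ * ⟪b k, x⟫) := by rw [hxx, Finset.mul_sum]
      _ ≤ ∑ k, μ k * (⟪x, b k⟫ * ⟪b k, x⟫) := Finset.sum_le_sum fun k _ => key k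
      _ = ⟪x, T x⟫ := hTx.symm
      _ = ⟪T x, x⟫ := real_inner_comm _ _
  -- the Lyapunov function
  set g : ℝ → ℝ := fun s => ⟪φ s, φ s⟫ * Real.exp (2 * C * lamG * s) with hgdef
  have hexp : ∀ s : ℝ, HasDerivAt (fun u => Real.exp (2 * C * lamG * u))
      (2 * C * lamG * Real.exp (2 * C * lamG * s)) s := by
    intro s
    have h1 : HasDerivAt (fun u : ℝ => 2 * C * lamG * u) (2 * C * lamG) s := by
      simpa using (hasDerivAt_id s).const_mul (2 * C * lamG)
    simpa [mul_comm] using h1.exp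
  have hgd : ∀ s ∈ Set.Ioo t0 t1, HasDerivAt g
      ((⟪φ s, -(C • T (φ s))⟫ + ⟪-(C • T (φ s)), φ s⟫) * Real.exp (2 * C * lamG * s)
        + ⟪φ s, φ s⟫ * (2 * C * lamG * Real.exp (2 * C * lamG * s))) s := by
    intro s hs
    exact (HasDerivAt.inner ℝ (hφd s hs) (hφd s hs)).mul (hexp s)
  have hgderiv_nonpos : ∀ s ∈ Set.Ioo t0 t1,
      (⟪φ s, -(C • T (φ s))⟫ + ⟪-(C • T (φ s)), φ s⟫) * Real.exp (2 * C * lamG * s)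
        + ⟪φ s, φ s⟫ * (2 * C * lamG * Real.exp (2 * C * lamG * s)) ≤ 0 := by
    intro s hs
    have h1 : (⟪φ s, -(C • T (φ s))⟫ : ℝ) = -(C * ⟪T (φ s), φ s⟫) := by
      rw [inner_neg_right, real_inner_smul_right, real_inner_comm]
    have h2 : (⟪-(C • T (φ s)), φ s⟫ : ℝ) = -(C * ⟪T (φ s), φ s⟫) := by
      rw [inner_neg_left, real_inner_smul_left]
    rw [h1, h2]
    have hsp := hspec (φ s) (hφmem s)
    have hepos : 0 < Real.exp (2 * C * lamG * s) := Real.exp_pos _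
    nlinarith [hepos, hsp, hC, mul_le_mul_of_nonneg_left hsp
      (by positivity : (0:ℝ) ≤ C * Real.exp (2 * C * lamG * s))]
  -- continuity of g on [t0, t1]
  have hΨcont : ContinuousOn Ψ (Set.Icc t0 t1) := ce.continuous.comp_continuousOn hcont
  have hφcont : ContinuousOn φ (Set.Icc t0 t1) :=
    hΨcont.sub (P.continuous.comp_continuousOn hΨcont)
  have hgcont : ContinuousOn g (Set.Icc t0 t1) :=
    (hφcont.inner hφcont).mul (Real.continuous_exp.comp (continuous_const.mul continuous_id)).continuousOn
  -- g is antitone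
  have hganti : AntitoneOn g (Set.Icc t0 t1) := by
    refine antitoneOn_of_deriv_nonpos (convex_Icc t0 t1) hgcont ?_ ?_
    · rw [interior_Icc]
      exact fun s hs => ((hgd s hs).differentiableAt).differentiableWithinAt
    · rw [interior_Icc]
      intro s hs
      rw [(hgd s hs).deriv]
      exact hgderiv_nonpos s hs
  have hg_le : g t ≤ g t0 :=
    hganti ⟨le_rfl, ht.le⟩ ⟨htl, htr⟩ htl
  -- initial norm bound
  have hψ0norm : (⟪Ψ t0, Ψ t0⟫ : ℝ) = eNorm ψ0 ^ 2 := by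
    have h1 : (⟪Ψ t0, Ψ t0⟫ : ℝ) = ‖Ψ t0‖ ^ 2 := real_inner_self_eq_norm_sq _
    have h2 : ‖Ψ t0‖ = eNorm ψ0 := by
      rw [EuclideanSpace.norm_eq, eNorm]
      congr 1
      refine Finset.sum_congr rfl fun k _ => ?_
      have : Ψ t0 k = ψ0 k := by rw [hΨdef]; simp [hinit]; rfl
      rw [this, Real.norm_eq_abs, sq_abs]
    rw [h1, h2]
  have hφ0 : (⟪φ t0, φ t0⟫ : ℝ) ≤ eNorm ψ0 ^ 2 := by
    rw [← hψ0norm]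
    have hdecomp : Ψ t0 = φ t0 + P (Ψ t0) := by rw [hφdef]; ring_nf; simp
    have horth : (⟪φ t0, P (Ψ t0)⟫ : ℝ) = 0 := by
      rw [real_inner_comm]
      exact (Submodule.mem_orthogonal K (φ t0)).mp (hφmem t0) (P (Ψ t0)) (hPmem (Ψ t0))
    have hPnn : (0:ℝ) ≤ ⟪P (Ψ t0), P (Ψ t0)⟫ := real_inner_self_nonneg
    calc (⟪φ t0, φ t0⟫ : ℝ) ≤ ⟪φ t0, φ t0⟫ + 2 * ⟪φ t0, P (Ψ t0)⟫ + ⟪P (Ψ t0), P (Ψ t0)⟫ := by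
          rw [horth]; linarith
      _ = ⟪Ψ t0, Ψ t0⟫ := by conv_rhs => rw [hdecomp]
                             rw [real_inner_add_add_self]
  -- norm decay
  have hd2 : Real.exp (-C * lamG * (t - t0)) ^ 2 = Real.exp (2 * C * lamG * t0) /
      Real.exp (2 * C * lamG * t) := by
    rw [sq, ← Real.exp_add, eq_div_iff (Real.exp_pos _).ne', ← Real.exp_add]
    congr 1; ring
  have hφt : (⟪φ t, φ t⟫ : ℝ) ≤ (eNorm ψ0 * Real.exp (-C * lamG * (t - t0))) ^ 2 := by
    have hepos : (0:ℝ) < Real.exp (2 * C * lamG * t) := Real.exp_pos _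
    have h1 : (⟪φ t, φ t⟫ : ℝ) ≤ ⟪φ t0, φ t0⟫ * Real.exp (2 * C * lamG * t0) /
        Real.exp (2 * C * lamG * t) := by
      rw [le_div_iff₀ hepos]
      exact hg_le
    calc (⟪φ t, φ t⟫ : ℝ) ≤ ⟪φ t0, φ t0⟫ * Real.exp (2 * C * lamG * t0) /
          Real.exp (2 * C * lamG * t) := h1
      _ ≤ eNorm ψ0 ^ 2 * (Real.exp (2 * C * lamG * t0) / Real.exp (2 * C * lamG * t)) := by
          rw [mul_div_assoc]
          exact mul_le_mul_of_nonneg_right hφ0 (by positivity)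
      _ = (eNorm ψ0 * Real.exp (-C * lamG * (t - t0))) ^ 2 := by
          rw [mul_pow, hd2]
  have hφnorm : ‖φ t‖ ≤ eNorm ψ0 * Real.exp (-C * lamG * (t - t0)) := by
    have h1 : ‖φ t‖ ^ 2 ≤ (eNorm ψ0 * Real.exp (-C * lamG * (t - t0))) ^ 2 := by
      rw [← real_inner_self_eq_norm_sq]; exact hφt
    have hrhs : (0:ℝ) ≤ eNorm ψ0 * Real.exp (-C * lamG * (t - t0)) := by
      have : (0:ℝ) ≤ eNorm ψ0 := Real.sqrt_nonneg _
      positivity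
    nlinarith [norm_nonneg (φ t)]
  -- coordinates vs norm
  have hcoord : ∀ (x : EuclideanSpace ℝ (Fin n)) (k : Fin n), |x k| ≤ ‖x‖ := by
    intro x k
    rw [EuclideanSpace.norm_eq, ← Real.sqrt_sq_eq_abs]
    apply Real.sqrt_le_sqrt
    have : (x k) ^ 2 = ‖x k‖ ^ 2 := by rw [Real.norm_eq_abs, sq_abs]
    rw [this]
    exact Finset.single_le_sum (fun l _ => sq_nonneg ‖x l‖) (Finset.mem_univ k)
  -- ψ difference equals φ difference
  have hdiff : ψ t i - ψ t j = φ t i - φ t j := by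
    have hPij : P (Ψ t) i = P (Ψ t) j := hKconst _ (hPmem (Ψ t))
    have hψi : ψ t i = φ t i + P (Ψ t) i := by
      have h1 : φ t i = Ψ t i - P (Ψ t) i := rfl
      have h2 : Ψ t i = ψ t i := rfl
      rw [h1, h2]; ring
    have hψj : ψ t j = φ t j + P (Ψ t) j := by
      have h1 : φ t j = Ψ t j - P (Ψ t) j := rfl
      have h2 : Ψ t j = ψ t j := rfl
      rw [h1, h2]; ring
    rw [hψi, hψj, hPij]; ring
  -- counting components: kG < n
  have hkn : kG < n := by
    rw [hk, Nat.card_eq_fintype_card, SimpleGraph.card_connectedComponent_eq_finrank_ker_toLin'_lapMatrix]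
    have hne : LinearMap.ker (Matrix.toLin' (G.lapMatrix ℝ)) ≠ ⊤ := by
      obtain ⟨v, hv0, hveq⟩ := hlameig
      intro htop
      have hv : v ∈ LinearMap.ker (Matrix.toLin' (G.lapMatrix ℝ)) := by
        rw [htop]; trivial
      rw [LinearMap.mem_ker, Matrix.toLin'_apply, hveq] at hv
      exact hv0 (by simpa [hlampos.ne'] using hv)
    have := Submodule.finrank_lt (s := LinearMap.ker (Matrix.toLin' (G.lapMatrix ℝ))) hne
    simpa using this
  have hnk : (1:ℝ) ≤ (n:ℝ) - (kG:ℝ) := by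
    have : (kG:ℝ) + 1 ≤ (n:ℝ) := by exact_mod_cast hkn
    linarith
  -- final chain
  have hfinal : φ t i - φ t j ≤ 2 * (eNorm ψ0 * Real.exp (-C * lamG * (t - t0))) := by
    have hi' := (hcoord (φ t) i)
    have hj' := (hcoord (φ t) j)
    have h1 : φ t i - φ t j ≤ |φ t i| + |φ t j| := by
      have := abs_sub (φ t i) (φ t j)
      have h := abs_sub_abs_le_abs_sub (φ t i) (φ t j)
      calc φ t i - φ t j ≤ |φ t i - φ t j| := le_abs_self _
        _ ≤ |φ t i| + |φ t j| := abs_sub _ _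
    linarith
  rw [hdiff]
  have hexpnn : (0:ℝ) ≤ Real.exp (-C * lamG * (t - t0)) := (Real.exp_pos _).le
  have heN : (0:ℝ) ≤ eNorm ψ0 := Real.sqrt_nonneg _
  calc φ t i - φ t j ≤ 2 * (eNorm ψ0 * Real.exp (-C * lamG * (t - t0))) := hfinal
    _ ≤ 2 * ((n:ℝ) - (kG:ℝ)) * eNorm ψ0 * Real.exp (-C * lamG * (t - t0)) := by
        nlinarith [mul_nonneg heN hexpnn]
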